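/- Let 1 ≤ d < m and let M ⊆ ℝᵐ be a nonempty, compact, connected set which is a d-dimensional C¹ submanifold of ℝᵐ, in the sense that for every x ∈ M there exist an open set U ⊆ ℝᵐ containing x and a C¹ map g : U → ℝ^{m−d} whose Fréchet derivative is surjective at every point of U and such that M ∩ U = g⁻¹({0}). Then M satisfies property (CON): there exists a constant a > 0 such that any two points x₁, x₂ ∈ M can be joined by a Lipschitz path γ : [0,1] → M with γ(0) = x₁, γ(1) = x₂ whose length (total variation) is at most a·|x₁ − x₂|. -/

import Mathlib

open Set

variable {E : Type*} [PseudoMetricSpace E]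

/-- Two points are joinable inside `M` by a Lipschitz path of length at most `L`. -/
def JoinIn (M : Set E) (p q : E) (L : ℝ) : Prop :=
  ∃ γ : ℝ → E, (∃ K : NNReal, LipschitzOnWith K γ (Set.Icc 0 1)) ∧
    γ 0 = p ∧ γ 1 = q ∧ Set.MapsTo γ (Set.Icc 0 1) M ∧
    eVariationOn γ (Set.Icc 0 1) ≤ ENNReal.ofReal L

theorem JoinIn.mono {M : Set E} {p q : E} {L L' : ℝ} (h : JoinIn M p q L) (hLL' : L ≤ L') :
    JoinIn M p q L' := by
  obtain ⟨γ, hK, h0, h1, hM, hv⟩ := h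
  exact ⟨γ, hK, h0, h1, hM, hv.trans (ENNReal.ofReal_le_ofReal hLL')⟩

theorem JoinIn.refl {M : Set E} {p : E} (hp : p ∈ M) : JoinIn M p p 0 := by
  refine ⟨fun _ => p, ⟨0, (LipschitzWith.const' p).lipschitzOnWith⟩, rfl, rfl, fun t _ => hp, ?_⟩
  rw [eVariationOn.constant_on]
  · simp
  · rintro a ⟨s, _, rfl⟩ b ⟨t, _, rfl⟩; rfl

theorem JoinIn.symm {M : Set E} {p q : E} {L : ℝ} (h : JoinIn M p q L) : JoinIn M q p L := by
  obtain ⟨γ, ⟨K, hK⟩, h0, h1, hM, hv⟩ := h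
  have himg : (fun t : ℝ => 1 - t) '' Set.Icc 0 1 = Set.Icc 0 1 := by
    rw [Set.image_const_sub_Icc]; norm_num
  have hmaps : Set.MapsTo (fun t : ℝ => 1 - t) (Set.Icc 0 1) (Set.Icc 0 1) := fun t ht => by
    simp only [Set.mem_Icc] at ht ⊢; constructor <;> linarith
  refine ⟨fun t => γ (1 - t), ⟨K * 1, hK.comp (LipschitzWith.lipschitzOnWith
    (by simpa using (LipschitzWith.const (1:ℝ)).sub LipschitzWith.id)) hmaps⟩, by simpa using h1, by simpa using h0,
    fun t ht => hM (hmaps ht), ?_⟩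
  have : eVariationOn (fun t => γ (1 - t)) (Set.Icc 0 1)
      = eVariationOn γ ((fun t : ℝ => 1 - t) '' Set.Icc 0 1) :=
    eVariationOn.comp_eq_of_antitoneOn γ _ (fun a _ b _ hab => by simp; linarith)
  rw [this, himg]; exact hv

theorem eVar_le_of_lip {γ : ℝ → E} {K : NNReal} (h : LipschitzOnWith K γ (Set.Icc 0 1)) :
    eVariationOn γ (Set.Icc 0 1) ≤ (K : ENNReal) := by
  have hid : eVariationOn (id : ℝ → ℝ) (Set.Icc 0 1) ≤ ENNReal.ofReal 1 := by
    have := (monotoneOn_id (s := Set.Icc (0:ℝ) 1)).eVariationOn_le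
      (Set.left_mem_Icc.2 zero_le_one) (Set.right_mem_Icc.2 zero_le_one)
    simpa [Set.inter_self] using this
  have := h.comp_eVariationOn_le (Set.mapsTo_id (Set.Icc (0:ℝ) 1))
  simp only [Function.comp_id] at this
  refine this.trans ?_
  calc (K : ENNReal) * eVariationOn (id : ℝ → ℝ) (Set.Icc 0 1)
      ≤ (K : ENNReal) * ENNReal.ofReal 1 := by gcongr
    _ = K := by simp

theorem JoinIn.trans {M : Set E} {p q r : E} {L₁ L₂ : ℝ} (h₁ : JoinIn M p q L₁)
    (h₂ : JoinIn M q r L₂) (hL₁ : 0 ≤ L₁) (hL₂ : 0 ≤ L₂) : JoinIn M p r (L₁ + L₂) := by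
  obtain ⟨γ₁, ⟨K₁, hK₁⟩, h10, h11, h1M, h1v⟩ := h₁
  obtain ⟨γ₂, ⟨K₂, hK₂⟩, h20, h21, h2M, h2v⟩ := h₂
  set γ : ℝ → E := fun t => if t ≤ 2⁻¹ then γ₁ (2 * t) else γ₂ (2 * t - 1) with hγdef
  have hmaps₁ : Set.MapsTo (fun t : ℝ => 2 * t) (Set.Icc 0 2⁻¹) (Set.Icc 0 1) := fun t ht => by
    simp only [Set.mem_Icc] at ht ⊢; constructor <;> linarith
  have hmaps₂ : Set.MapsTo (fun t : ℝ => 2 * t - 1) (Set.Icc 2⁻¹ 1) (Set.Icc 0 1) := fun t ht => by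
    simp only [Set.mem_Icc] at ht ⊢; constructor <;> linarith
  have heq₁ : Set.EqOn γ (fun t => γ₁ (2 * t)) (Set.Icc 0 2⁻¹) := fun t ht => by
    simp only [hγdef]; rw [if_pos ht.2]
  have heq₂ : Set.EqOn γ (fun t => γ₂ (2 * t - 1)) (Set.Icc 2⁻¹ 1) := fun t ht => by
    simp only [hγdef]
    rcases lt_or_eq_of_le ht.1 with h | h
    · rw [if_neg (by linarith)]
    · rw [if_pos (le_of_eq h.symm), ← h]
      norm_num [h11, h20]
  -- Lipschitz pieces
  have hLip₁ : LipschitzOnWith (K₁ * 2) γ (Set.Icc 0 2⁻¹) := by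
    refine LipschitzOnWith.of_dist_le_mul fun s hs t ht => ?_
    rw [heq₁ hs, heq₁ ht]
    calc dist (γ₁ (2*s)) (γ₁ (2*t)) ≤ K₁ * dist (2*s) (2*t) :=
          hK₁.dist_le_mul _ (hmaps₁ hs) _ (hmaps₁ ht)
      _ = (K₁ * 2 : NNReal) * dist s t := by
          rw [dist_eq_norm, dist_eq_norm]; push_cast; rw [← mul_sub, norm_mul]
          simp [abs_of_nonneg]; ring
  have hLip₂ : LipschitzOnWith (K₂ * 2) γ (Set.Icc 2⁻¹ 1) := by
    refine LipschitzOnWith.of_dist_le_mul fun s hs t ht => ?_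
    rw [heq₂ hs, heq₂ ht]
    calc dist (γ₂ (2*s-1)) (γ₂ (2*t-1)) ≤ K₂ * dist (2*s-1) (2*t-1) :=
          hK₂.dist_le_mul _ (hmaps₂ hs) _ (hmaps₂ ht)
      _ = (K₂ * 2 : NNReal) * dist s t := by
          rw [dist_eq_norm, dist_eq_norm]; push_cast
          have : 2*s-1 - (2*t-1) = 2*(s-t) := by ring
          rw [this, norm_mul]; simp [abs_of_nonneg]; ring
  have hLip : LipschitzOnWith (K₁ * 2 + K₂ * 2) γ (Set.Icc 0 1) := by
    refine LipschitzOnWith.of_dist_le_mul fun s hs t ht => ?_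
    rcases le_total s 2⁻¹ with h1 | h1 <;> rcases le_total t 2⁻¹ with h2 | h2
    · refine (hLip₁.dist_le_mul _ ⟨hs.1, h1⟩ _ ⟨ht.1, h2⟩).trans ?_
      have : (0:ℝ) ≤ dist s t := dist_nonneg
      push_cast; nlinarith [K₂.coe_nonneg]
    · have hmid : (2⁻¹ : ℝ) ∈ Set.Icc (0:ℝ) 1 := by norm_num
      calc dist (γ s) (γ t) ≤ dist (γ s) (γ 2⁻¹) + dist (γ 2⁻¹) (γ t) := dist_triangle _ _ _
        _ ≤ (K₁*2 : NNReal) * dist s 2⁻¹ + (K₂*2 : NNReal) * dist 2⁻¹ t := by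
            gcongr
            · exact hLip₁.dist_le_mul _ ⟨hs.1, h1⟩ _ ⟨by norm_num, le_refl _⟩
            · exact hLip₂.dist_le_mul _ ⟨le_refl _, by norm_num⟩ _ ⟨h2, ht.2⟩
        _ ≤ (K₁*2 + K₂*2 : NNReal) * dist s t := by
            rw [Real.dist_eq, Real.dist_eq, Real.dist_eq]
            rw [abs_of_nonpos (by linarith), abs_of_nonpos (by linarith),
              abs_of_nonpos (by linarith)]
            push_cast; nlinarith [K₁.coe_nonneg, K₂.coe_nonneg]
    · calc dist (γ s) (γ t) ≤ dist (γ s) (γ 2⁻¹) + dist (γ 2⁻¹) (γ t) := dist_triangle _ _ _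
        _ ≤ (K₂*2 : NNReal) * dist s 2⁻¹ + (K₁*2 : NNReal) * dist 2⁻¹ t := by
            gcongr
            · exact hLip₂.dist_le_mul _ ⟨h1, hs.2⟩ _ ⟨le_refl _, by norm_num⟩
            · exact hLip₁.dist_le_mul _ ⟨by norm_num, le_refl _⟩ _ ⟨ht.1, h2⟩
        _ ≤ (K₁*2 + K₂*2 : NNReal) * dist s t := by
            rw [Real.dist_eq, Real.dist_eq, Real.dist_eq]
            rw [abs_of_nonneg (by linarith), abs_of_nonneg (by linarith),
              abs_of_nonneg (by linarith)]
            push_cast; nlinarith [K₁.coe_nonneg, K₂.coe_nonneg]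
    · refine (hLip₂.dist_le_mul _ ⟨h1, hs.2⟩ _ ⟨h2, ht.2⟩).trans ?_
      have : (0:ℝ) ≤ dist s t := dist_nonneg
      push_cast; nlinarith [K₁.coe_nonneg]
  -- variation
  have himg₁ : (fun t : ℝ => 2 * t) '' Set.Icc 0 2⁻¹ = Set.Icc 0 1 := by
    ext y; simp only [Set.mem_image, Set.mem_Icc]
    constructor
    · rintro ⟨t, ⟨h0, h1⟩, rfl⟩; constructor <;> linarith
    · rintro ⟨h0, h1⟩; exact ⟨y/2, by constructor <;> linarith, by ring⟩
  have himg₂ : (fun t : ℝ => 2 * t - 1) '' Set.Icc 2⁻¹ 1 = Set.Icc 0 1 := by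
    ext y; simp only [Set.mem_image, Set.mem_Icc]
    constructor
    · rintro ⟨t, ⟨h0, h1⟩, rfl⟩; constructor <;> linarith
    · rintro ⟨h0, h1⟩; exact ⟨(y+1)/2, by constructor <;> linarith, by ring⟩
  have hvar₁ : eVariationOn γ (Set.Icc 0 2⁻¹) ≤ ENNReal.ofReal L₁ := by
    rw [eVariationOn.eq_of_eqOn heq₁,
      show (fun t : ℝ => γ₁ (2*t)) = γ₁ ∘ (fun t : ℝ => 2*t) from rfl,
      eVariationOn.comp_eq_of_monotoneOn γ₁ _
        (fun a _ b _ hab => by dsimp; linarith : MonotoneOn (fun t : ℝ => 2*t) (Set.Icc 0 2⁻¹)),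
      himg₁]
    exact h1v
  have hvar₂ : eVariationOn γ (Set.Icc 2⁻¹ 1) ≤ ENNReal.ofReal L₂ := by
    rw [eVariationOn.eq_of_eqOn heq₂,
      show (fun t : ℝ => γ₂ (2*t-1)) = γ₂ ∘ (fun t : ℝ => 2*t-1) from rfl,
      eVariationOn.comp_eq_of_monotoneOn γ₂ _
        (fun a _ b _ hab => by dsimp; linarith : MonotoneOn (fun t : ℝ => 2*t-1) (Set.Icc 2⁻¹ 1)),
      himg₂]
    exact h2v
  have hvar : eVariationOn γ (Set.Icc 0 1) ≤ ENNReal.ofReal (L₁ + L₂) := by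
    have key := eVariationOn.Icc_add_Icc γ (s := Set.Icc (0:ℝ) 1)
      (by norm_num : (0:ℝ) ≤ 2⁻¹) (by norm_num : (2⁻¹:ℝ) ≤ 1) (by norm_num)
    have e1 : Set.Icc (0:ℝ) 1 ∩ Set.Icc 0 2⁻¹ = Set.Icc (0:ℝ) 2⁻¹ := by
      rw [Set.Icc_inter_Icc]; norm_num
    have e2 : Set.Icc (0:ℝ) 1 ∩ Set.Icc 2⁻¹ 1 = Set.Icc (2⁻¹:ℝ) 1 := by
      rw [Set.Icc_inter_Icc]; norm_num
    have e3 : Set.Icc (0:ℝ) 1 ∩ Set.Icc 0 1 = Set.Icc (0:ℝ) 1 := Set.inter_self _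
    rw [e1, e2, e3] at key
    rw [← key, ENNReal.ofReal_add hL₁ hL₂]
    exact add_le_add hvar₁ hvar₂
  refine ⟨γ, ⟨K₁*2 + K₂*2, hLip⟩, ?_, ?_, ?_, hvar⟩
  · rw [heq₁ (by norm_num : (0:ℝ) ∈ Set.Icc (0:ℝ) 2⁻¹)]; simpa using h10
  · rw [heq₂ (by norm_num : (1:ℝ) ∈ Set.Icc (2⁻¹:ℝ) 1)]; norm_num [h21]
  · intro t ht
    rcases le_total t 2⁻¹ with h | h
    · rw [heq₁ ⟨ht.1, h⟩]; exact h1M (hmaps₁ ⟨ht.1, h⟩)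
    · rw [heq₂ ⟨h, ht.2⟩]; exact h2M (hmaps₂ ⟨h, ht.2⟩)

open Metric

set_option maxHeartbeats 1000000 in
theorem local_chordarc {m k : ℕ} {M : Set (EuclideanSpace ℝ (Fin m))}
    {x : EuclideanSpace ℝ (Fin m)} (hx : x ∈ M)
    {U : Set (EuclideanSpace ℝ (Fin m))} (hUopen : IsOpen U) (hxU : x ∈ U)
    {g : EuclideanSpace ℝ (Fin m) → EuclideanSpace ℝ (Fin k)}
    (hg : ContDiffOn ℝ 1 g U)
    (hg' : ∃ g' : EuclideanSpace ℝ (Fin m) →L[ℝ] EuclideanSpace ℝ (Fin k),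
      HasFDerivAt g g' x ∧ Function.Surjective g')
    (hMU : M ∩ U = {z ∈ U | g z = 0}) :
    ∃ r > 0, ∀ p ∈ M ∩ ball x r, ∀ q ∈ M ∩ ball x r, JoinIn M p q (3 * dist p q) := by
  classical
  obtain ⟨A, hA, hAs⟩ := hg'
  have hca : ContDiffAt ℝ 1 g x := hg.contDiffAt (hUopen.mem_nhds hxU)
  have hst0 := hca.hasStrictFDerivAt one_ne_zero
  rw [hA.fderiv] at hst0
  have hrange : A.range = ⊤ := LinearMap.range_eq_top.2 hAs
  set Φ := hst0.implicitToOpenPartialHomeomorph g A hrange with hΦdef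
  set φ : ↥A.ker → EuclideanSpace ℝ (Fin m) :=
    fun y => hst0.implicitFunction g A hrange (g x) y with hφdef
  have hgx : g x = 0 := by
    have hxMU : x ∈ M ∩ U := ⟨hx, hxU⟩
    rw [hMU] at hxMU; exact hxMU.2
  have hφ0 : φ 0 = x := hst0.implicitFunction_apply_image hrange
  have hder : HasStrictFDerivAt φ A.ker.subtypeL 0 :=
    hst0.to_implicitFunction hrange
  -- quantitative bi-Lipschitz estimate near 0
  have est := hder.isLittleO.def (c := 1/2) (by norm_num)
  rw [Metric.eventually_nhds_iff] at est
  obtain ⟨ε, hε, hest⟩ := est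
  -- g ∘ φ = 0 and φ ∈ U near 0
  have ev1 : ∀ᶠ y : ↥A.ker in nhds 0, g (φ y) = g x := by
    have ht : Filter.Tendsto (fun y : ↥A.ker => (g x, y)) (nhds 0)
        (nhds (g x, (0 : ↥A.ker))) :=
      (continuous_const.prodMk continuous_id).tendsto 0
    exact ht.eventually (hst0.map_implicitFunction_eq hrange)
  have ev2 : ∀ᶠ y : ↥A.ker in nhds 0, φ y ∈ U :=
    hder.continuousAt.eventually_mem (by rw [hφ0]; exact hUopen.mem_nhds hxU)
  rw [Metric.eventually_nhds_iff] at ev1 ev2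
  obtain ⟨ρ₁, hρ₁, hev1⟩ := ev1
  obtain ⟨ρ₂, hρ₂, hev2⟩ := ev2
  set ρ := min ρ₁ (min ρ₂ ε) with hρdef
  have hρ : 0 < ρ := lt_min hρ₁ (lt_min hρ₂ hε)
  have P1 : ∀ y ∈ ball (0 : ↥A.ker) ρ, g (φ y) = 0 ∧ φ y ∈ U := by
    intro y hy
    rw [mem_ball] at hy
    constructor
    · rw [hev1 (by simp only [dist_zero_right] at hy ⊢; exact lt_of_lt_of_le hy (min_le_left _ _)),
        hgx]
    · exact hev2 (lt_of_lt_of_le hy ((min_le_right _ _).trans (min_le_left _ _)))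
  have P2 : ∀ y ∈ ball (0 : ↥A.ker) ρ, ∀ z ∈ ball (0 : ↥A.ker) ρ,
      ‖φ y - φ z - ((y - z : ↥A.ker) : EuclideanSpace ℝ (Fin m))‖
        ≤ 1/2 * ‖y - z‖ := by
    intro y hy z hz
    rw [mem_ball] at hy hz
    have := hest (y := (y, z)) (by
      rw [Prod.dist_eq]
      exact max_lt (lt_of_lt_of_le hy ((min_le_right _ _).trans (min_le_right _ _)))
        (lt_of_lt_of_le hz ((min_le_right _ _).trans (min_le_right _ _))))
    simpa [Submodule.norm_coe] using this
  have hφM : ∀ y ∈ ball (0 : ↥A.ker) ρ, φ y ∈ M := by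
    intro y hy
    obtain ⟨h1, h2⟩ := P1 y hy
    have : φ y ∈ M ∩ U := by rw [hMU]; exact ⟨h2, h1⟩
    exact this.1
  -- choose r
  have evs1 : ∀ᶠ z in nhds x, hst0.implicitFunction g A hrange (g z) (Φ z).2 = z :=
    hst0.eq_implicitFunction hrange
  have evs2 : ∀ᶠ z in nhds x, (Φ z).2 ∈ ball (0 : ↥A.ker) ρ := by
    have hΦc : ContinuousAt Φ x :=
      Φ.continuousAt (hst0.mem_implicitToOpenPartialHomeomorph_source hrange)
    have hsnd : ContinuousAt (fun z => (Φ z).2) x := continuous_snd.continuousAt.comp hΦc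
    refine hsnd.eventually_mem (isOpen_ball.mem_nhds ?_)
    have : Φ x = (g x, 0) := hst0.implicitToOpenPartialHomeomorph_self hrange
    rw [this]
    exact mem_ball_self hρ
  have evs3 : ∀ᶠ z in nhds x, z ∈ U := hUopen.eventually_mem hxU
  obtain ⟨r, hr, hrprop⟩ := Metric.eventually_nhds_iff.1 ((evs1.and evs2).and evs3)
  refine ⟨r, hr, ?_⟩
  rintro p ⟨hpM, hpb⟩ q ⟨hqM, hqb⟩
  rw [mem_ball] at hpb hqb
  obtain ⟨⟨hp1, hp2⟩, hp3⟩ := hrprop hpb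
  obtain ⟨⟨hq1, hq2⟩, hq3⟩ := hrprop hqb
  have hgp : g p = g x := by
    have : p ∈ M ∩ U := ⟨hpM, hp3⟩
    rw [hMU] at this; rw [this.2, hgx]
  have hgq : g q = g x := by
    have : q ∈ M ∩ U := ⟨hqM, hq3⟩
    rw [hMU] at this; rw [this.2, hgx]
  set u := (Φ p).2 with hu_def
  set v := (Φ q).2 with hv_def
  have hφu : φ u = p := by rw [hφdef]; dsimp only; rw [← hgp]; exact hp1
  have hφv : φ v = q := by rw [hφdef]; dsimp only; rw [← hgq]; exact hq1
  have huv : ‖u - v‖ ≤ 2 * ‖p - q‖ := by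
    have h1 := P2 u hp2 v hq2
    rw [hφu, hφv] at h1
    have h2 : ‖((u - v : ↥A.ker) : EuclideanSpace ℝ (Fin m))‖ = ‖u - v‖ :=
      Submodule.norm_coe _
    set w : EuclideanSpace ℝ (Fin m) := ((u - v : ↥A.ker) : EuclideanSpace ℝ (Fin m))
      with hw
    have h3 : ‖w‖ ≤ ‖p - q‖ + ‖p - q - w‖ := by
      have hww : w = (p - q) - ((p - q) - w) := by abel
      calc ‖w‖ = ‖(p - q) - ((p - q) - w)‖ := by rw [← hww]
        _ ≤ ‖p - q‖ + ‖p - q - w‖ := norm_sub_le _ _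
    rw [hw] at h3
    rw [h2] at h3
    linarith
  -- the path
  set γ : ℝ → EuclideanSpace ℝ (Fin m) := fun t => φ (u + t • (v - u)) with hγdef
  have hmem : ∀ t ∈ Set.Icc (0:ℝ) 1, u + t • (v - u) ∈ ball (0 : ↥A.ker) ρ :=
    fun t ht => (convex_ball _ _).add_smul_sub_mem hp2 hq2 ht
  have hptdist : ∀ s ∈ Set.Icc (0:ℝ) 1, ∀ t ∈ Set.Icc (0:ℝ) 1,
      dist (γ s) (γ t) ≤ (3 * dist p q) * dist s t := by
    intro s hs t ht
    set y := u + s • (v - u)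
    set z := u + t • (v - u)
    have hyz : y - z = (s - t) • (v - u) := by
      simp only [y, z]
      rw [sub_smul]
      abel
    have hest2 := P2 y (hmem s hs) z (hmem t ht)
    have hn1 : ‖((y - z : ↥A.ker) : EuclideanSpace ℝ (Fin m))‖ = ‖y - z‖ :=
      Submodule.norm_coe _
    have htri : ‖φ y - φ z‖ ≤ ‖φ y - φ z - ((y - z : ↥A.ker) :
        EuclideanSpace ℝ (Fin m))‖ + ‖y - z‖ := by
      rw [← hn1]
      calc ‖φ y - φ z‖ = ‖(φ y - φ z - ((y - z : ↥A.ker) :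
            EuclideanSpace ℝ (Fin m))) + ((y - z : ↥A.ker) :
            EuclideanSpace ℝ (Fin m))‖ := by congr 1; abel
        _ ≤ _ := norm_add_le _ _
    have hnyz : ‖y - z‖ ≤ |s - t| * (2 * ‖p - q‖) := by
      rw [hyz, norm_smul, Real.norm_eq_abs]
      have : ‖v - u‖ = ‖u - v‖ := norm_sub_rev _ _
      rw [this]
      exact mul_le_mul_of_nonneg_left huv (abs_nonneg _)
    rw [dist_eq_norm, dist_eq_norm, Real.dist_eq]
    change ‖φ y - φ z‖ ≤ 3 * ‖p - q‖ * |s - t|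
    nlinarith [abs_nonneg (s - t), norm_nonneg (p - q)]
  have hLip : LipschitzOnWith (Real.toNNReal (3 * dist p q)) γ (Set.Icc 0 1) := by
    refine LipschitzOnWith.of_dist_le_mul fun s hs t ht => ?_
    rw [Real.coe_toNNReal _ (by positivity)]
    exact hptdist s hs t ht
  refine ⟨γ, ⟨_, hLip⟩, ?_, ?_, ?_, ?_⟩
  · show φ (u + (0:ℝ) • (v - u)) = p
    rw [zero_smul, add_zero, hφu]
  · show φ (u + (1:ℝ) • (v - u)) = q
    rw [one_smul]
    have : u + (v - u) = v := by abel
    rw [this, hφv]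
  · exact fun t ht => hφM _ (hmem t ht)
  · refine (eVar_le_of_lip hLip).trans ?_
    exact le_of_eq rfl


/-- A nonempty compact connected `d`-dimensional `C¹` submanifold of `ℝᵐ`
(locally a regular level set of a `C¹` submersion) satisfies property (CON): two points can
be joined inside `M` by a Lipschitz path of length at most `a·|x₁ − x₂|`. -/
theorem stmt7 {m d : ℕ} (hd : 1 ≤ d) (hdm : d < m)
    (M : Set (EuclideanSpace ℝ (Fin m)))
    (hne : M.Nonempty) (hcpt : IsCompact M) (hconn : IsConnected M)
    (hman : ∀ x ∈ M, ∃ U : Set (EuclideanSpace ℝ (Fin m)), IsOpen U ∧ x ∈ U ∧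
      ∃ g : EuclideanSpace ℝ (Fin m) → EuclideanSpace ℝ (Fin (m - d)),
        ContDiffOn ℝ 1 g U ∧
        (∀ z ∈ U, ∃ g' : EuclideanSpace ℝ (Fin m) →L[ℝ] EuclideanSpace ℝ (Fin (m - d)),
          HasFDerivAt g g' z ∧ Function.Surjective g') ∧
        M ∩ U = {z ∈ U | g z = 0}) :
    ∃ a > (0 : ℝ), ∀ x₁ ∈ M, ∀ x₂ ∈ M,
      ∃ γ : ℝ → EuclideanSpace ℝ (Fin m),
        (∃ K : NNReal, LipschitzOnWith K γ (Set.Icc 0 1)) ∧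
        γ 0 = x₁ ∧ γ 1 = x₂ ∧ Set.MapsTo γ (Set.Icc 0 1) M ∧
        eVariationOn γ (Set.Icc 0 1) ≤ ENNReal.ofReal (a * dist x₁ x₂) := by
  classical
  have hloc : ∀ x ∈ M, ∃ r > 0, ∀ p ∈ M ∩ ball x r, ∀ q ∈ M ∩ ball x r,
      JoinIn M p q (3 * dist p q) := by
    intro x hx
    obtain ⟨U, hUo, hxU, g, hg, hg', hMU⟩ := hman x hx
    exact local_chordarc hx hUo hxU hg (hg' x hxU) hMU
  choose! r hr hrP using hloc
  obtain ⟨δ, hδ, hδP⟩ := lebesgue_number_lemma_of_metric (ι := ↥M)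
    (c := fun i => ball i.1 (r i.1)) hcpt (fun _ => isOpen_ball)
    (fun z hz => Set.mem_iUnion.2 ⟨⟨z, hz⟩, mem_ball_self (hr z hz)⟩)
  have hDloc : ∀ p ∈ M, ∀ q ∈ M, dist p q < δ → JoinIn M p q (3 * dist p q) := by
    intro p hp q hq hpq
    obtain ⟨i, hi⟩ := hδP p hp
    have hp' : p ∈ ball i.1 (r i.1) := hi (mem_ball_self hδ)
    have hq' : q ∈ ball i.1 (r i.1) := hi (by rw [mem_ball, dist_comm]; exact hpq)
    exact hrP i.1 i.2 p ⟨hp, hp'⟩ q ⟨hq, hq'⟩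
  obtain ⟨p₀, hp₀⟩ := hne
  set S : Set (EuclideanSpace ℝ (Fin m)) :=
    {q | q ∈ M ∧ ∃ L, 0 ≤ L ∧ JoinIn M p₀ q L} with hSdef
  have hS : ∀ q ∈ M, q ∈ S := by
    by_contra hcon
    push_neg at hcon
    obtain ⟨q₁, hq₁M, hq₁S⟩ := hcon
    set Uo := ⋃ q ∈ S, ball q δ with hUodef
    set Vo := ⋃ q ∈ M \ S, ball q δ with hVodef
    have hUoopen : IsOpen Uo := isOpen_biUnion fun _ _ => isOpen_ball
    have hVoopen : IsOpen Vo := isOpen_biUnion fun _ _ => isOpen_ball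
    have hcover : M ⊆ Uo ∪ Vo := by
      intro z hz
      by_cases h : z ∈ S
      · exact Or.inl (Set.mem_biUnion h (mem_ball_self hδ))
      · exact Or.inr (Set.mem_biUnion ⟨hz, h⟩ (mem_ball_self hδ))
    have hp₀S : p₀ ∈ S := ⟨hp₀, 0, le_rfl, JoinIn.refl hp₀⟩
    have h1 : (M ∩ Uo).Nonempty := ⟨p₀, hp₀, Set.mem_biUnion hp₀S (mem_ball_self hδ)⟩
    have h2 : (M ∩ Vo).Nonempty := ⟨q₁, hq₁M, Set.mem_biUnion ⟨hq₁M, hq₁S⟩ (mem_ball_self hδ)⟩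
    obtain ⟨z, hzM, hzU, hzV⟩ := hconn.isPreconnected Uo Vo hUoopen hVoopen hcover h1 h2
    obtain ⟨q, hqS, hzq⟩ := Set.mem_iUnion₂.1 hzU
    obtain ⟨q', hq'MS, hzq'⟩ := Set.mem_iUnion₂.1 hzV
    obtain ⟨hqM, Lq, hLq0, hLqJ⟩ := hqS
    have hJqz : JoinIn M q z (3 * dist q z) :=
      hDloc q hqM z hzM (by rw [dist_comm]; exact mem_ball.1 hzq)
    have hJzq' : JoinIn M z q' (3 * dist z q') :=
      hDloc z hzM q' hq'MS.1 (mem_ball.1 hzq')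
    have : JoinIn M p₀ q' (Lq + 3 * dist q z + 3 * dist z q') :=
      ((hLqJ.trans hJqz hLq0 (by positivity)).trans hJzq' (by positivity) (by positivity))
    exact hq'MS.2 ⟨hq'MS.1, _, by positivity, this⟩
  have hS' : ∀ q ∈ M, ∃ L, 0 ≤ L ∧ JoinIn M p₀ q L := fun q hq => (hS q hq).2
  choose! L hL0 hLJ using hS'
  obtain ⟨t, ht⟩ := hcpt.elim_finite_subcover (fun i : ↥M => ball i.1 δ)
    (fun _ => isOpen_ball) (fun z hz => Set.mem_iUnion.2 ⟨⟨z, hz⟩, mem_ball_self hδ⟩)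
  have htne : t.Nonempty := by
    have := ht hp₀
    rw [Set.mem_iUnion₂] at this
    obtain ⟨i, hit, _⟩ := this
    exact ⟨i, hit⟩
  set B := t.sup' htne (fun i => L i.1 + 3 * δ) with hBdef
  have hB0 : 0 ≤ B := by
    obtain ⟨i, hi⟩ := htne
    have h1 : 0 ≤ L i.1 + 3 * δ := by
      have := hL0 i.1 i.2
      positivity
    exact h1.trans (Finset.le_sup' (fun i : ↥M => L i.1 + 3 * δ) hi)
  have hBjoin : ∀ q ∈ M, JoinIn M p₀ q B := by
    intro q hq
    have := ht hq
    rw [Set.mem_iUnion₂] at this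
    obtain ⟨i, hit, hqi⟩ := this
    have hdi : dist i.1 q < δ := by rw [dist_comm]; exact mem_ball.1 hqi
    have hJ1 : JoinIn M p₀ i.1 (L i.1) := hLJ i.1 i.2
    have hJ2 : JoinIn M i.1 q (3 * dist i.1 q) := hDloc i.1 i.2 q hq hdi
    refine (hJ1.trans hJ2 (hL0 i.1 i.2) (by positivity)).mono ?_
    have : L i.1 + 3 * δ ≤ B := Finset.le_sup' (fun i : ↥M => L i.1 + 3 * δ) hit
    have hd0 : (0:ℝ) ≤ dist i.1 q := dist_nonneg
    linarith
  refine ⟨3 + 2 * B / δ, by positivity, ?_⟩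
  intro x₁ hx₁ x₂ hx₂
  have hd0 : (0:ℝ) ≤ dist x₁ x₂ := dist_nonneg
  have hc0 : (0:ℝ) ≤ 2 * B / δ := by positivity
  by_cases hcase : dist x₁ x₂ < δ
  · exact (hDloc x₁ hx₁ x₂ hx₂ hcase).mono (by nlinarith)
  · push_neg at hcase
    have h1 : JoinIn M x₁ x₂ (B + B) :=
      ((hBjoin x₁ hx₁).symm).trans (hBjoin x₂ hx₂) hB0 hB0
    refine h1.mono ?_
    have hcδ : 2 * B / δ * δ = 2 * B := div_mul_cancel₀ _ (ne_of_gt hδ)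
    nlinarith
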